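/- Let S_λ be a densely defined weighted shift on a leafless directed tree T with nonzero weights λ = {λ_v}_{v∈V°} ⊆ ℂ. Then S_λ is hyponormal if and only if Σ_{v∈Chi(u)} |λ_v|² / ‖S_λ e_v‖² ≤ 1 for every u ∈ V. -/

import Mathlib

open scoped ENNReal NNReal Classical

noncomputable section

/-- A directed tree: a directed graph with nonempty vertex set in which each vertex has
at most one parent, there are no circuits, and the underlying undirected graph is
connected and has no cycles (i.e. is a tree). -/
structure DirectedTree (V : Type) where
  edge : V → V → Prop
  nonempty : Nonempty V
  antisymm : ∀ u v : V, edge u v → ¬ edge v u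
  parent_unique : ∀ u v w : V, edge u w → edge v w → u = v
  isTree : (SimpleGraph.fromRel edge).IsTree

namespace DirectedTree

variable {V : Type} (T : DirectedTree V)

/-- The set of children of a vertex. -/
def chi (u : V) : Set V := {v | T.edge u v}

/-- `v` has a parent. -/
def HasParent (v : V) : Prop := ∃ u, T.edge u v

/-- `V⁰`: the set of non-root vertices, i.e. the vertices possessing a parent. -/
def Vcirc : Set V := {v | T.HasParent v}

/-- The tree is leafless if every vertex has a child. -/
def Leafless : Prop := ∀ u : V, (T.chi u).Nonempty

/-- The parent of a vertex (junk value if the vertex is a root). -/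
def par (v : V) : V := if h : T.HasParent v then h.choose else T.nonempty.some

/-- The set of descendants of a vertex. -/
def desc (u : V) : Set V := {w | Relation.ReflTransGen T.edge u w}

/-- The formal weighted shift map `Λ_T` acting on all complex functions on `V`. -/
def Lam (lam : V → ℂ) (f : V → ℂ) : V → ℂ :=
  fun v => if T.HasParent v then lam v * f (T.par v) else 0

/-- The domain of the weighted shift `S_λ`. -/
def domain (lam : V → ℂ) : Set (lp (fun _ : V => ℂ) 2) :=
  {f | Memℓp (T.Lam lam ⇑f) 2}

/-- The weighted shift `S_λ` (extended by `0` outside its domain). -/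
def shift (lam : V → ℂ) (f : lp (fun _ : V => ℂ) 2) : lp (fun _ : V => ℂ) 2 :=
  if h : f ∈ T.domain lam then (⟨T.Lam lam ⇑f, h⟩ : lp (fun _ : V => ℂ) 2) else 0

/-- The domain of `S_λ²`. -/
def squareDomain (lam : V → ℂ) : Set (lp (fun _ : V => ℂ) 2) :=
  {f | f ∈ T.domain lam ∧ T.shift lam f ∈ T.domain lam}

/-- The domain of the adjoint `S_λ*`. -/
def adjDomain (lam : V → ℂ) : Set (lp (fun _ : V => ℂ) 2) :=
  {g | ∃ h : lp (fun _ : V => ℂ) 2,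
    ∀ f ∈ T.domain lam, (inner ℂ (T.shift lam f) g : ℂ) = inner ℂ f h}

/-- `S_λ` is hyponormal: it is densely defined, `D(S_λ) ⊆ D(S_λ*)` and
`‖S_λ* f‖ ≤ ‖S_λ f‖` for every `f ∈ D(S_λ)` (the adjoint value at `f` being any vector
`h` satisfying `⟪S_λ g, f⟫ = ⟪g, h⟫` for all `g ∈ D(S_λ)`; it is unique by density). -/
def IsHyponormal (lam : V → ℂ) : Prop :=
  Dense (T.domain lam) ∧ T.domain lam ⊆ T.adjDomain lam ∧
    ∀ f ∈ T.domain lam, ∀ h : lp (fun _ : V => ℂ) 2,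
      (∀ g ∈ T.domain lam, (inner ℂ (T.shift lam g) f : ℂ) = inner ℂ g h) →
        ‖h‖ ≤ ‖T.shift lam f‖

/-- `ζ_u = (Σ_{v ∈ Chi(u)} |λ_v|²)^{1/2} ∈ [0,∞]`. -/
def zeta (lam : V → ℂ) (u : V) : ℝ≥0∞ :=
  (∑' v : T.chi u, ((‖lam (v : V)‖₊ : ℝ≥0∞)) ^ 2) ^ (1/2 : ℝ)

end DirectedTree

namespace DirectedTree

variable {V : Type} (T : DirectedTree V)

-- ### auxiliary
lemma par_eq {u v : V} (h : T.edge u v) : T.par v = u := by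
  have hp : T.HasParent v := ⟨u, h⟩
  rw [par, dif_pos hp]
  exact T.parent_unique _ _ _ hp.choose_spec h

lemma edge_par {v : V} (h : T.HasParent v) : T.edge (T.par v) v := by
  obtain ⟨u, hu⟩ := h
  rw [T.par_eq hu]; exact hu

lemma hasParent_of_mem_chi {u v : V} (h : v ∈ T.chi u) : T.HasParent v := ⟨u, h⟩

def chiEquiv : (Σ u : V, T.chi u) ≃ T.Vcirc where
  toFun := fun p => ⟨p.2.1, ⟨p.1, p.2.2⟩⟩
  invFun := fun v => ⟨T.par v.1, ⟨v.1, T.edge_par v.2⟩⟩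
  left_inv := fun p => by
    obtain ⟨u, v, hv⟩ := p
    have h : T.par v = u := T.par_eq hv
    subst h
    rfl
  right_inv := fun v => rfl

lemma tsum_chi_ennreal (g : V → ℝ≥0∞) (hg : ∀ v, ¬ T.HasParent v → g v = 0) :
    ∑' (u : V), ∑' (v : T.chi u), g v = ∑' v : V, g v := by
  have h1 : ∑' v : T.Vcirc, g v = ∑' v : V, g v :=
    tsum_subtype_eq_of_support_subset (fun v hv => by
      by_contra hpar; exact hv (hg v hpar))
  rw [← h1, ← (T.chiEquiv).tsum_eq (fun v : T.Vcirc => g v),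
    ← ENNReal.tsum_sigma (fun u (v : T.chi u) => g v)]
  rfl

lemma tsum_chi_complex (g : V → ℂ) (hg0 : ∀ v, ¬ T.HasParent v → g v = 0)
    (hs : Summable g) (hfib : ∀ u, Summable (fun v : T.chi u => g v)) :
    ∑' v : V, g v = ∑' (u : V), ∑' (v : T.chi u), g v := by
  have h1 : ∑' v : T.Vcirc, g v = ∑' v : V, g v :=
    tsum_subtype_eq_of_support_subset (fun v hv => by
      by_contra hpar; exact hv (hg0 v hpar))
  have hs2 : Summable (fun v : T.Vcirc => g v) := hs.subtype _
  have hs3 : Summable (fun p : Σ u : V, T.chi u => g ((T.chiEquiv p) : V)) :=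
    (T.chiEquiv.summable_iff).2 hs2
  rw [← h1, ← T.chiEquiv.tsum_eq (fun v : T.Vcirc => g ↑v)]
  exact Summable.tsum_sigma' hfib hs3

end DirectedTree

namespace DirectedTree

variable {V : Type} (T : DirectedTree V)

lemma ennnorm_sq_eq (f : lp (fun _ : V => ℂ) 2) :
    (‖f‖₊ : ℝ≥0∞) ^ 2 = ∑' v, (‖(f : ∀ _ : V, ℂ) v‖₊ : ℝ≥0∞) ^ 2 := by
  have hp : (0:ℝ) < (2 : ℝ≥0∞).toReal := by norm_num
  have h := lp.hasSum_norm hp f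
  have h2 : ((2 : ℝ≥0∞).toReal) = ((2:ℕ):ℝ) := by norm_num
  rw [h2] at h
  simp only [Real.rpow_natCast] at h
  have hsum := h.tsum_eq
  have hofr := ENNReal.ofReal_tsum_of_nonneg
    (fun v => pow_nonneg (norm_nonneg ((f : ∀ _ : V, ℂ) v)) 2) h.summable
  rw [hsum] at hofr
  calc (‖f‖₊ : ℝ≥0∞) ^ 2 = ENNReal.ofReal (‖f‖ ^ 2) := by
        rw [ENNReal.ofReal_pow (norm_nonneg f), ofReal_norm, enorm_eq_nnnorm]
    _ = ∑' v, ENNReal.ofReal (‖(f : ∀ _ : V, ℂ) v‖ ^ 2) := hofr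
    _ = _ := by
        refine tsum_congr fun v => ?_
        rw [ENNReal.ofReal_pow (norm_nonneg _), ofReal_norm, enorm_eq_nnnorm]

lemma meml2_iff (g : V → ℂ) :
    Memℓp g 2 ↔ (∑' v, (‖g v‖₊ : ℝ≥0∞) ^ 2) ≠ ∞ := by
  have hp : (0:ℝ) < (2 : ℝ≥0∞).toReal := by norm_num
  rw [memℓp_gen_iff hp]
  have h2 : ((2 : ℝ≥0∞).toReal) = ((2:ℕ):ℝ) := by norm_num
  rw [h2]
  simp only [Real.rpow_natCast]
  have e1 : (fun v => ‖g v‖ ^ (2:ℕ)) = fun v => ((‖g v‖₊ ^ 2 : ℝ≥0) : ℝ) := by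
    funext v; push_cast [coe_nnnorm]; ring
  have e2 : (fun v => (‖g v‖₊ : ℝ≥0∞) ^ 2) = fun v => ((‖g v‖₊ ^ 2 : ℝ≥0) : ℝ≥0∞) := by
    funext v; push_cast; ring
  rw [e1, e2, NNReal.summable_coe]
  exact (ENNReal.tsum_coe_ne_top_iff_summable).symm

variable (lam : V → ℂ)

lemma lam_apply_chi (f : V → ℂ) {u v : V} (hv : v ∈ T.chi u) :
    T.Lam lam f v = lam v * f u := by
  rw [Lam, if_pos (T.hasParent_of_mem_chi hv), T.par_eq hv]

lemma lam_apply_root (f : V → ℂ) {v : V} (hv : ¬ T.HasParent v) : T.Lam lam f v = 0 := by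
  rw [Lam, if_neg hv]

def zsq (u : V) : ℝ≥0∞ := ∑' v : T.chi u, (‖lam (v : V)‖₊ : ℝ≥0∞) ^ 2

lemma lamsum_eq (f : V → ℂ) :
    ∑' v, (‖T.Lam lam f v‖₊ : ℝ≥0∞) ^ 2 = ∑' u, T.zsq lam u * (‖f u‖₊ : ℝ≥0∞) ^ 2 := by
  rw [← T.tsum_chi_ennreal (fun v => (‖T.Lam lam f v‖₊ : ℝ≥0∞) ^ 2)
    (fun v hv => by simp [T.lam_apply_root lam f hv])]
  refine tsum_congr fun u => ?_
  rw [zsq, ← ENNReal.tsum_mul_right]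
  refine tsum_congr fun v => ?_
  rw [T.lam_apply_chi lam f v.2]
  push_cast [nnnorm_mul]
  ring

lemma mem_domain_iff (f : lp (fun _ : V => ℂ) 2) :
    f ∈ T.domain lam ↔ (∑' u, T.zsq lam u * (‖(f : ∀ _ : V, ℂ) u‖₊ : ℝ≥0∞) ^ 2) ≠ ∞ := by
  rw [domain, Set.mem_setOf_eq, meml2_iff, T.lamsum_eq]

lemma shift_coe {f : lp (fun _ : V => ℂ) 2} (hf : f ∈ T.domain lam) :
    ⇑(T.shift lam f) = T.Lam lam ⇑f := by
  rw [shift, dif_pos hf]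

lemma shift_ennnorm_sq {f : lp (fun _ : V => ℂ) 2} (hf : f ∈ T.domain lam) :
    (‖T.shift lam f‖₊ : ℝ≥0∞) ^ 2 = ∑' u, T.zsq lam u * (‖(f : ∀ _ : V, ℂ) u‖₊ : ℝ≥0∞) ^ 2 := by
  rw [ennnorm_sq_eq, ← T.lamsum_eq]
  refine tsum_congr fun v => ?_
  rw [T.shift_coe lam hf]

lemma zsq_pos (hleafless : T.Leafless) (hnz : ∀ v ∈ T.Vcirc, lam v ≠ 0) (u : V) :
    0 < T.zsq lam u := by
  obtain ⟨v, hv⟩ := hleafless u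
  have hle : (‖lam v‖₊ : ℝ≥0∞) ^ 2 ≤ T.zsq lam u :=
    ENNReal.le_tsum (⟨v, hv⟩ : T.chi u)
  have hne : lam v ≠ 0 := hnz v (T.hasParent_of_mem_chi hv)
  refine lt_of_lt_of_le ?_ hle
  have : (0:ℝ≥0∞) < (‖lam v‖₊ : ℝ≥0∞) := by
    simpa [pos_iff_ne_zero] using hne
  exact ENNReal.pow_pos this 2

end DirectedTree

namespace DirectedTree

variable {V : Type} (T : DirectedTree V) (lam : V → ℂ)

lemma eval_continuous (u : V) :
    Continuous (fun f : lp (fun _ : V => ℂ) 2 => (f : ∀ _ : V, ℂ) u) := by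
  refine LipschitzWith.continuous (K := 1) (LipschitzWith.of_dist_le_mul fun f g => ?_)
  rw [NNReal.coe_one, one_mul, dist_eq_norm, dist_eq_norm]
  have h1 : (f : ∀ _ : V, ℂ) u - (g : ∀ _ : V, ℂ) u = ((f - g : lp (fun _ : V => ℂ) 2) : ∀ _ : V, ℂ) u := by
    simp [lp.coeFn_sub]
  rw [h1]
  exact lp.norm_apply_le_norm (by norm_num) (f - g) u

lemma zsq_ne_top (hdense : Dense (T.domain lam)) (u : V) : T.zsq lam u ≠ ∞ := by
  intro htop
  have hsub : T.domain lam ⊆ {f : lp (fun _ : V => ℂ) 2 | (f : ∀ _ : V, ℂ) u = 0} := by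
    intro f hf
    by_contra hfu
    apply (T.mem_domain_iff lam f).1 hf
    have hle : T.zsq lam u * (‖(f : ∀ _ : V, ℂ) u‖₊ : ℝ≥0∞) ^ 2 ≤
        ∑' w, T.zsq lam w * (‖(f : ∀ _ : V, ℂ) w‖₊ : ℝ≥0∞) ^ 2 := ENNReal.le_tsum u
    rw [htop] at hle
    have hpos : (‖(f : ∀ _ : V, ℂ) u‖₊ : ℝ≥0∞) ^ 2 ≠ 0 := by
      simpa [pow_eq_zero_iff] using hfu
    rw [ENNReal.top_mul hpos] at hle
    exact top_le_iff.1 hle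
  have hclosed : IsClosed {f : lp (fun _ : V => ℂ) 2 | (f : ∀ _ : V, ℂ) u = 0} :=
    isClosed_eq (eval_continuous u) continuous_const
  have huniv : (Set.univ : Set (lp (fun _ : V => ℂ) 2)) ⊆ {f | (f : ∀ _ : V, ℂ) u = 0} := by
    rw [← hdense.closure_eq]
    exact closure_minimal hsub hclosed
  have := huniv (Set.mem_univ (lp.single 2 u (1:ℂ)))
  simp only [Set.mem_setOf_eq, lp.single_apply_self] at this
  exact one_ne_zero this

lemma coe_sum_single (F : Finset V) (c : V → ℂ) (w : V) :
    ((∑ v ∈ F, lp.single 2 v (c v) : lp (fun _ : V => ℂ) 2) : ∀ _ : V, ℂ) w =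
      if w ∈ F then c w else 0 := by
  rw [lp.coeFn_sum]
  simp only [Finset.sum_apply, lp.single_apply, eq_rec_constant]
  simp only [Pi.single_apply]
  exact Finset.sum_ite_eq F w c

lemma tsum_single_weight (u : V) :
    ∑' w, T.zsq lam w * (‖(lp.single 2 u (1:ℂ) : lp (fun _ : V => ℂ) 2) w‖₊ : ℝ≥0∞) ^ 2
      = T.zsq lam u := by
  rw [tsum_eq_single u]
  · simp [lp.single_apply_self]
  · intro w hw
    rw [lp.single_apply_ne 2 u _ hw]
    simp

lemma single_mem_domain (hfin : ∀ w : V, T.zsq lam w ≠ ∞) (u : V) :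
    lp.single 2 u (1:ℂ) ∈ T.domain lam := by
  rw [T.mem_domain_iff lam, T.tsum_single_weight lam u]
  exact hfin u

lemma shift_single_ennnorm (hfin : ∀ w : V, T.zsq lam w ≠ ∞) (u : V) :
    (‖T.shift lam (lp.single 2 u (1:ℂ))‖₊ : ℝ≥0∞) ^ 2 = T.zsq lam u := by
  rw [T.shift_ennnorm_sq lam (T.single_mem_domain lam hfin u), T.tsum_single_weight lam u]

end DirectedTree

lemma ennreal_cauchy_schwarz {ι : Type} (a b : ι → ℝ≥0∞) :
    (∑' i, a i * b i) ^ 2 ≤ (∑' i, (a i) ^ 2) * ∑' i, (b i) ^ 2 := by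
  letI : MeasurableSpace ι := ⊤
  haveI : MeasurableSingletonClass ι := ⟨fun _ => trivial⟩
  have hmeas : ∀ f : ι → ℝ≥0∞, Measurable f := fun f s _ => trivial
  have h := ENNReal.lintegral_mul_le_Lp_mul_Lq (MeasureTheory.Measure.count (α := ι))
    (p := 2) (q := 2) ⟨by norm_num, by norm_num, by norm_num⟩ (hmeas a).aemeasurable
    (hmeas b).aemeasurable
  simp only [Pi.mul_apply, MeasureTheory.lintegral_count] at h
  have h2 : ∀ x : ι → ℝ≥0∞, ∑' i, x i ^ (2:ℝ) = ∑' i, x i ^ 2 := by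
    intro x; exact tsum_congr fun i => ENNReal.rpow_two (x i)
  rw [h2, h2] at h
  calc (∑' i, a i * b i) ^ 2
      ≤ ((∑' i, a i ^ 2) ^ ((1:ℝ)/2) * (∑' i, b i ^ 2) ^ ((1:ℝ)/2)) ^ 2 := by
        exact pow_le_pow_left' h 2
    _ = (∑' i, (a i) ^ 2) * ∑' i, (b i) ^ 2 := by
        rw [mul_pow, ← ENNReal.rpow_natCast (_ ^ ((1:ℝ)/2)) 2,
          ← ENNReal.rpow_natCast ((∑' i, b i ^ 2) ^ ((1:ℝ)/2)) 2,
          ← ENNReal.rpow_mul, ← ENNReal.rpow_mul]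
        norm_num

namespace DirectedTree

variable {V : Type} (T : DirectedTree V) (lam : V → ℂ)

lemma dense_unique (hdense : Dense (T.domain lam)) {h h' : lp (fun _ : V => ℂ) 2}
    (hh : ∀ g ∈ T.domain lam, (inner ℂ g h : ℂ) = inner ℂ g h') : h = h' := by
  have hsub : T.domain lam ⊆ {g : lp (fun _ : V => ℂ) 2 | (inner ℂ g (h - h') : ℂ) = 0} := by
    intro g hg
    simp only [Set.mem_setOf_eq, inner_sub_right, hh g hg, sub_self]
  have hclosed : IsClosed {g : lp (fun _ : V => ℂ) 2 | (inner ℂ g (h - h') : ℂ) = 0} :=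
    isClosed_eq (Continuous.inner continuous_id continuous_const) continuous_const
  have huniv : (Set.univ : Set (lp (fun _ : V => ℂ) 2)) ⊆
      {g : lp (fun _ : V => ℂ) 2 | (inner ℂ g (h - h') : ℂ) = 0} := by
    rw [← hdense.closure_eq]
    exact closure_minimal hsub hclosed
  have h0 := huniv (Set.mem_univ (h - h'))
  simp only [Set.mem_setOf_eq, inner_self_eq_zero, sub_eq_zero] at h0
  exact h0

/-- Forward direction: hyponormality implies the child-sum condition. -/
lemma forward (hleafless : T.Leafless) (hnz : ∀ v ∈ T.Vcirc, lam v ≠ 0)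
    (hdense : Dense (T.domain lam))
    (hhyp : ∀ f ∈ T.domain lam, ∀ h : lp (fun _ : V => ℂ) 2,
      (∀ g ∈ T.domain lam, (inner ℂ (T.shift lam g) f : ℂ) = inner ℂ g h) →
        ‖h‖ ≤ ‖T.shift lam f‖) (u : V) :
    ∑' v : T.chi u, (‖lam (v : V)‖₊ : ℝ≥0∞) ^ 2 / T.zsq lam v ≤ 1 := by
  have hfin : ∀ w : V, T.zsq lam w ≠ ∞ := T.zsq_ne_top lam hdense
  have hpos : ∀ w : V, 0 < T.zsq lam w := T.zsq_pos lam hleafless hnz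
  -- reduce to finite subsets of `chi u`
  rw [ENNReal.tsum_eq_iSup_sum]
  refine iSup_le fun s => ?_
  -- transfer to a finset of `V`
  set F : Finset V := s.image Subtype.val with hF
  have hFchi : ∀ v ∈ F, v ∈ T.chi u := by
    intro v hv
    obtain ⟨w, _, rfl⟩ := Finset.mem_image.1 hv
    exact w.2
  have hsum_eq : ∑ v ∈ s, (‖lam (v : V)‖₊ : ℝ≥0∞) ^ 2 / T.zsq lam v
      = ∑ v ∈ F, (‖lam v‖₊ : ℝ≥0∞) ^ 2 / T.zsq lam v := by
    rw [hF, Finset.sum_image (fun x _ y _ h => Subtype.ext h)]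
  rw [hsum_eq]
  -- the real quantities
  set zr : V → ℝ := fun v => (T.zsq lam v).toReal with hzr
  have hzrpos : ∀ v : V, 0 < zr v := fun v =>
    ENNReal.toReal_pos (hpos v).ne' (hfin v)
  set c : V → ℂ := fun v => lam v * ((zr v : ℂ))⁻¹ with hc
  set s₀ : ℝ := ∑ v ∈ F, ‖lam v‖ ^ 2 / zr v with hs₀
  have hs₀nonneg : 0 ≤ s₀ := Finset.sum_nonneg fun v _ =>
    div_nonneg (pow_nonneg (norm_nonneg _) 2) (hzrpos v).le
  -- the test vector
  set f : lp (fun _ : V => ℂ) 2 := ∑ v ∈ F, lp.single 2 v (c v) with hf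
  have hfcoe : ∀ w, (f : ∀ _ : V, ℂ) w = if w ∈ F then c w else 0 :=
    coe_sum_single F c
  have hwt : ∀ w, T.zsq lam w * (‖(f : ∀ _ : V, ℂ) w‖₊ : ℝ≥0∞) ^ 2
      = if w ∈ F then T.zsq lam w * (‖c w‖₊ : ℝ≥0∞) ^ 2 else 0 := by
    intro w
    rw [hfcoe w]
    by_cases hw : w ∈ F <;> simp [hw]
  have hwtsum : ∑' w, T.zsq lam w * (‖(f : ∀ _ : V, ℂ) w‖₊ : ℝ≥0∞) ^ 2
      = ∑ w ∈ F, T.zsq lam w * (‖c w‖₊ : ℝ≥0∞) ^ 2 := by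
    rw [tsum_eq_sum (s := F) (fun w hw => by rw [hwt w, if_neg hw])]
    exact Finset.sum_congr rfl fun w hw => by rw [hwt w, if_pos hw]
  -- the term computation
  have hterm : ∀ v : V, T.zsq lam v * (‖c v‖₊ : ℝ≥0∞) ^ 2
      = ENNReal.ofReal (‖lam v‖ ^ 2 / zr v) := by
    intro v
    have hnc : ‖c v‖ = ‖lam v‖ * (zr v)⁻¹ := by
      rw [hc]
      simp only [norm_mul, norm_inv, Complex.norm_real, Real.norm_eq_abs,
        abs_of_pos (hzrpos v)]
    have hz : T.zsq lam v = ENNReal.ofReal (zr v) := (ENNReal.ofReal_toReal (hfin v)).symm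
    rw [hz, ← enorm_eq_nnnorm, ← ofReal_norm, ← ENNReal.ofReal_pow (norm_nonneg _),
      ← ENNReal.ofReal_mul (ENNReal.toReal_nonneg), hnc]
    congr 1
    field_simp [(hzrpos v).ne']
    ring
  have hterm2 : ∀ v : V, (‖lam v‖₊ : ℝ≥0∞) ^ 2 / T.zsq lam v
      = ENNReal.ofReal (‖lam v‖ ^ 2 / zr v) := by
    intro v
    have hz : T.zsq lam v = ENNReal.ofReal (zr v) := (ENNReal.ofReal_toReal (hfin v)).symm
    rw [ENNReal.ofReal_div_of_pos (hzrpos v), hz, ← enorm_eq_nnnorm, ← ofReal_norm,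
      ← ENNReal.ofReal_pow (norm_nonneg _)]
  have hA : ∑ v ∈ F, (‖lam v‖₊ : ℝ≥0∞) ^ 2 / T.zsq lam v = ENNReal.ofReal s₀ := by
    rw [hs₀, ENNReal.ofReal_sum_of_nonneg (fun v _ =>
      div_nonneg (pow_nonneg (norm_nonneg _) 2) (hzrpos v).le)]
    exact Finset.sum_congr rfl fun v _ => hterm2 v
  -- f ∈ domain
  have hfdom : f ∈ T.domain lam := by
    rw [T.mem_domain_iff lam, hwtsum]
    exact (ENNReal.sum_lt_top.2 fun w _ => ENNReal.mul_lt_top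
      (lt_top_iff_ne_top.2 (hfin w)) (ENNReal.pow_lt_top ENNReal.coe_lt_top)).ne
  -- the norm of `shift f`
  have hnormsq : (‖T.shift lam f‖₊ : ℝ≥0∞) ^ 2 = ENNReal.ofReal s₀ := by
    rw [T.shift_ennnorm_sq lam hfdom, hwtsum, hs₀,
      ENNReal.ofReal_sum_of_nonneg (fun v _ =>
        div_nonneg (pow_nonneg (norm_nonneg _) 2) (hzrpos v).le)]
    exact Finset.sum_congr rfl fun v _ => hterm v
  have hnormsq' : ‖T.shift lam f‖ ^ 2 = s₀ := by
    have := congrArg ENNReal.toReal hnormsq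
    rwa [ENNReal.toReal_pow, ENNReal.coe_toReal, coe_nnnorm,
      ENNReal.toReal_ofReal hs₀nonneg] at this
  -- the candidate adjoint vector
  set t : ℂ := (s₀ : ℂ) with ht
  have htval : ∑ v ∈ F, (starRingEnd ℂ) (lam v) * c v = t := by
    rw [ht, hs₀]
    push_cast
    refine Finset.sum_congr rfl fun v _ => ?_
    rw [hc, ← mul_assoc]
    rw [show (starRingEnd ℂ) (lam v) * lam v = ((‖lam v‖ ^ 2 : ℝ) : ℂ) from by
      rw [mul_comm, Complex.mul_conj, Complex.normSq_eq_norm_sq]]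
    push_cast
    ring
  -- the adjoint identity
  have hprop : ∀ g ∈ T.domain lam,
      (inner ℂ (T.shift lam g) f : ℂ) = inner ℂ g (lp.single 2 u t) := by
    intro g hg
    have h1 : (inner ℂ (T.shift lam g) f : ℂ)
        = ∑ v ∈ F, (starRingEnd ℂ) (lam v) * c v * (starRingEnd ℂ) ((g : ∀ _ : V, ℂ) u) := by
      rw [hf, inner_sum]
      refine Finset.sum_congr rfl fun v hv => ?_
      have h2 : (inner ℂ (T.shift lam g) (lp.single 2 v (c v)) : ℂ)
          = (starRingEnd ℂ) ((inner ℂ (lp.single 2 v (c v)) (T.shift lam g) : ℂ)) :=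
        (inner_conj_symm _ _).symm
      rw [h2, lp.inner_single_left, RCLike.inner_apply']
      have h3 : (T.shift lam g : ∀ _ : V, ℂ) v = lam v * (g : ∀ _ : V, ℂ) u := by
        rw [T.shift_coe lam hg, T.lam_apply_chi lam _ (hFchi v hv)]
      rw [h3]
      simp only [map_mul, Complex.conj_conj]
      ring
    have h4 : (inner ℂ g (lp.single 2 u t) : ℂ)
        = t * (starRingEnd ℂ) ((g : ∀ _ : V, ℂ) u) := by
      rw [← inner_conj_symm, lp.inner_single_left, RCLike.inner_apply']
      simp only [map_mul, Complex.conj_conj]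
    rw [h1, h4, ← Finset.sum_mul, htval]
  have hineq := hhyp f hfdom (lp.single 2 u t : lp (fun _ : V => ℂ) 2) hprop
  have hns : ‖(lp.single 2 u t : lp (fun _ : V => ℂ) 2)‖ = s₀ := by
    have := lp.norm_single (E := fun _ : V => ℂ) (p := 2) (by norm_num) u t
    rw [this, ht]
    simp [Complex.norm_real, abs_of_nonneg hs₀nonneg]
  rw [hns] at hineq
  have hs₀sq : s₀ ^ 2 ≤ s₀ := by
    calc s₀ ^ 2 ≤ ‖T.shift lam f‖ ^ 2 := by
          have := mul_self_le_mul_self hs₀nonneg hineq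
          simpa [pow_two] using this
      _ = s₀ := hnormsq'
  have hs₀le : s₀ ≤ 1 := by nlinarith
  rw [hA]
  exact ENNReal.ofReal_le_one.2 hs₀le

end DirectedTree

namespace DirectedTree

variable {V : Type} (T : DirectedTree V) (lam : V → ℂ)

lemma backward (hleafless : T.Leafless) (hnz : ∀ v ∈ T.Vcirc, lam v ≠ 0)
    (hdense : Dense (T.domain lam))
    (hcond : ∀ u : V, ∑' v : T.chi u, (‖lam (v : V)‖₊ : ℝ≥0∞) ^ 2 / T.zsq lam v ≤ 1)
    {f : lp (fun _ : V => ℂ) 2} (hf : f ∈ T.domain lam) :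
    ∃ h : lp (fun _ : V => ℂ) 2,
      (∀ g ∈ T.domain lam, (inner ℂ (T.shift lam g) f : ℂ) = inner ℂ g h) ∧
        ‖h‖ ≤ ‖T.shift lam f‖ := by
  have hfin : ∀ w : V, T.zsq lam w ≠ ∞ := T.zsq_ne_top lam hdense
  have hpos : ∀ w : V, 0 < T.zsq lam w := T.zsq_pos lam hleafless hnz
  set r : V → ℝ≥0∞ := fun v => (T.zsq lam v) ^ ((1:ℝ)/2) with hrdef
  have hr0 : ∀ v, r v ≠ 0 := fun v => (ENNReal.rpow_pos (hpos v) (hfin v)).ne'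
  have hrt : ∀ v, r v ≠ ∞ := fun v => ENNReal.rpow_ne_top_of_nonneg (by norm_num) (hfin v)
  have hr2 : ∀ v, r v ^ 2 = T.zsq lam v := by
    intro v
    rw [hrdef]
    rw [← ENNReal.rpow_natCast (T.zsq lam v ^ ((1:ℝ)/2)) 2, ← ENNReal.rpow_mul]
    norm_num
  set P : V → ℝ≥0∞ := fun u => ∑' v : T.chi u,
    (‖lam (v : V)‖₊ : ℝ≥0∞) * (‖(f : ∀ _ : V, ℂ) (v : V)‖₊ : ℝ≥0∞) with hPdef
  set Q : V → ℝ≥0∞ := fun u => ∑' v : T.chi u,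
    T.zsq lam (v : V) * (‖(f : ∀ _ : V, ℂ) (v : V)‖₊ : ℝ≥0∞) ^ 2 with hQdef
  have hPQ : ∀ u, P u ^ 2 ≤ Q u := by
    intro u
    have hab : P u = ∑' v : T.chi u,
        ((‖lam (v : V)‖₊ : ℝ≥0∞) * (r v)⁻¹) * (r v * ‖(f : ∀ _ : V, ℂ) (v : V)‖₊) := by
      rw [hPdef]
      refine tsum_congr fun v => ?_
      have he : (‖lam (v : V)‖₊ : ℝ≥0∞) * (r v)⁻¹ * (r v * ‖(f : ∀ _ : V, ℂ) (v : V)‖₊)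
          = (r v)⁻¹ * r v * ((‖lam (v : V)‖₊ : ℝ≥0∞) * ‖(f : ∀ _ : V, ℂ) (v : V)‖₊) := by
        ring
      rw [he, ENNReal.inv_mul_cancel (hr0 v) (hrt v), one_mul]
    calc P u ^ 2 ≤ (∑' v : T.chi u, ((‖lam (v : V)‖₊ : ℝ≥0∞) * (r v)⁻¹) ^ 2)
          * ∑' v : T.chi u, (r v * (‖(f : ∀ _ : V, ℂ) (v : V)‖₊ : ℝ≥0∞)) ^ 2 := by
          rw [hab]; exact ennreal_cauchy_schwarz _ _
      _ ≤ 1 * Q u := by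
          refine mul_le_mul' ?_ ?_
          · refine le_trans (le_of_eq ?_) (hcond u)
            refine tsum_congr fun v => ?_
            rw [mul_pow, ← ENNReal.inv_pow, hr2, div_eq_mul_inv]
          · refine le_of_eq (tsum_congr fun v => ?_)
            rw [mul_pow, hr2]
      _ = Q u := one_mul _
  have hQsum : ∑' u, Q u ≤ (‖T.shift lam f‖₊ : ℝ≥0∞) ^ 2 := by
    have h1 : ∑' u, Q u = ∑' w, (if T.HasParent w
        then T.zsq lam w * (‖(f : ∀ _ : V, ℂ) w‖₊ : ℝ≥0∞) ^ 2 else 0) := by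
      rw [← T.tsum_chi_ennreal _ (fun v hv => if_neg hv)]
      exact tsum_congr fun u => tsum_congr fun v =>
        (if_pos (T.hasParent_of_mem_chi v.2)).symm
    rw [h1, T.shift_ennnorm_sq lam hf]
    refine ENNReal.tsum_le_tsum fun w => ?_
    split_ifs with hw
    · exact le_rfl
    · exact zero_le
  have htot : ∑' u, P u ^ 2 ≤ (‖T.shift lam f‖₊ : ℝ≥0∞) ^ 2 :=
    le_trans (ENNReal.tsum_le_tsum hPQ) hQsum
  have hshift_ne : (‖T.shift lam f‖₊ : ℝ≥0∞) ^ 2 ≠ ∞ :=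
    ENNReal.pow_ne_top ENNReal.coe_ne_top
  have hPfin : ∀ u, P u ≠ ∞ := by
    intro u hu
    have h1 : P u ^ 2 ≤ (‖T.shift lam f‖₊ : ℝ≥0∞) ^ 2 :=
      le_trans (ENNReal.le_tsum u) htot
    rw [hu, pow_two, ENNReal.top_mul_top] at h1
    exact hshift_ne (top_le_iff.1 h1)
  have hnorms : ∀ u, Summable (fun v : T.chi u =>
      ‖(starRingEnd ℂ) (lam (v : V)) * (f : ∀ _ : V, ℂ) (v : V)‖) := by
    intro u
    have he : (fun v : T.chi u => ‖(starRingEnd ℂ) (lam (v : V)) * (f : ∀ _ : V, ℂ) (v : V)‖)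
        = fun v : T.chi u => ((‖lam (v : V)‖₊ * ‖(f : ∀ _ : V, ℂ) (v : V)‖₊ : ℝ≥0) : ℝ) := by
      funext v
      rw [norm_mul, RCLike.norm_conj]
      push_cast [coe_nnnorm]
      ring
    rw [he, NNReal.summable_coe]
    refine ENNReal.tsum_coe_ne_top_iff_summable.1 ?_
    have he2 : ∑' v : T.chi u, ((‖lam (v : V)‖₊ * ‖(f : ∀ _ : V, ℂ) (v : V)‖₊ : ℝ≥0) : ℝ≥0∞)
        = P u := by
      refine tsum_congr fun v => ?_
      push_cast
      rfl
    rw [he2]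
    exact hPfin u
  have hsummand : ∀ u, Summable (fun v : T.chi u =>
      (starRingEnd ℂ) (lam (v : V)) * (f : ∀ _ : V, ℂ) (v : V)) :=
    fun u => Summable.of_norm (hnorms u)
  set h₀ : V → ℂ := fun u => ∑' v : T.chi u,
    (starRingEnd ℂ) (lam (v : V)) * (f : ∀ _ : V, ℂ) (v : V) with hh₀
  have hbound : ∀ u, (‖h₀ u‖₊ : ℝ≥0∞) ≤ P u := by
    intro u
    calc (‖h₀ u‖₊ : ℝ≥0∞) = ENNReal.ofReal ‖h₀ u‖ := (ofReal_norm _).symm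
      _ ≤ ENNReal.ofReal (∑' v : T.chi u,
            ‖(starRingEnd ℂ) (lam (v : V)) * (f : ∀ _ : V, ℂ) (v : V)‖) :=
          ENNReal.ofReal_le_ofReal (norm_tsum_le_tsum_norm (hnorms u))
      _ = ∑' v : T.chi u, ENNReal.ofReal
            ‖(starRingEnd ℂ) (lam (v : V)) * (f : ∀ _ : V, ℂ) (v : V)‖ :=
          ENNReal.ofReal_tsum_of_nonneg (fun v => norm_nonneg _) (hnorms u)
      _ = P u := by
          refine tsum_congr fun v => ?_
          rw [ofReal_norm, enorm_eq_nnnorm, nnnorm_mul, RCLike.nnnorm_conj]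
          push_cast
          rfl
  have hmem : Memℓp h₀ 2 := by
    rw [meml2_iff]
    refine ne_top_of_le_ne_top hshift_ne (le_trans (ENNReal.tsum_le_tsum fun u => ?_) htot)
    exact pow_le_pow_left' (hbound u) 2
  set h : lp (fun _ : V => ℂ) 2 := ⟨h₀, hmem⟩ with hhdef
  have hcoe : ∀ u, (h : ∀ _ : V, ℂ) u = h₀ u := fun u => rfl
  have hnormsq : (‖h‖₊ : ℝ≥0∞) ^ 2 ≤ (‖T.shift lam f‖₊ : ℝ≥0∞) ^ 2 := by
    rw [ennnorm_sq_eq]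
    refine le_trans (le_trans (ENNReal.tsum_le_tsum fun u => ?_) (ENNReal.tsum_le_tsum hPQ)) hQsum
    rw [hcoe u]
    exact pow_le_pow_left' (hbound u) 2
  have hnorm : ‖h‖ ≤ ‖T.shift lam f‖ := by
    have h2 : ‖h‖ ^ 2 ≤ ‖T.shift lam f‖ ^ 2 := by
      have := ENNReal.toReal_mono hshift_ne hnormsq
      rwa [ENNReal.toReal_pow, ENNReal.toReal_pow, ENNReal.coe_toReal, ENNReal.coe_toReal,
        coe_nnnorm, coe_nnnorm] at this
    have h3 := Real.sqrt_le_sqrt h2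
    rwa [Real.sqrt_sq (norm_nonneg _), Real.sqrt_sq (norm_nonneg _)] at h3
  refine ⟨h, fun g hg => ?_, hnorm⟩
  set φ : V → ℂ := fun w => (starRingEnd ℂ) ((T.Lam lam ⇑g) w) * (f : ∀ _ : V, ℂ) w with hφ
  have hφ0 : ∀ w, ¬ T.HasParent w → φ w = 0 := fun w hw => by
    rw [hφ]; simp [T.lam_apply_root lam _ hw]
  have hφs : Summable φ := by
    have := lp.summable_inner (𝕜 := ℂ) (T.shift lam g) f
    simp only [RCLike.inner_apply', T.shift_coe lam hg] at this
    exact this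
  have hφfib : ∀ u, Summable fun v : T.chi u => φ (v : V) := by
    intro u
    have h1 := (hsummand u).mul_left ((starRingEnd ℂ) ((g : ∀ _ : V, ℂ) u))
    refine h1.congr fun v => ?_
    rw [hφ]
    simp only
    rw [T.lam_apply_chi lam _ v.2, map_mul]
    ring
  have hLHS : (inner ℂ (T.shift lam g) f : ℂ) = ∑' w, φ w := by
    rw [lp.inner_eq_tsum]
    refine tsum_congr fun w => ?_
    rw [RCLike.inner_apply', T.shift_coe lam hg]
  have hmid := T.tsum_chi_complex φ hφ0 hφs hφfib
  have hRHS : (inner ℂ g h : ℂ) = ∑' (u : V), ∑' (v : T.chi u), φ (v : V) := by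
    rw [lp.inner_eq_tsum]
    refine tsum_congr fun u => ?_
    rw [RCLike.inner_apply', hcoe u, hh₀, ← tsum_mul_left]
    refine tsum_congr fun v => ?_
    rw [hφ]
    simp only
    rw [T.lam_apply_chi lam _ v.2, map_mul]
    ring
  rw [hLHS, hmid, hRHS]

end DirectedTree



/-- Theorem 4.1: a densely defined weighted shift on a leafless directed tree with
nonzero weights is hyponormal iff `Σ_{v∈Chi(u)} |λ_v|²/‖S_λ e_v‖² ≤ 1` for all `u ∈ V`. -/
theorem stmt13 {V : Type} (T : DirectedTree V) (lam : V → ℂ)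
    (hleafless : T.Leafless) (hnz : ∀ v ∈ T.Vcirc, lam v ≠ 0)
    (hdense : Dense (T.domain lam)) :
    T.IsHyponormal lam ↔
      ∀ u : V, ∑' v : T.chi u, (‖lam (v:V)‖₊ : ℝ≥0∞) ^ 2 /
        (‖T.shift lam (lp.single 2 (v:V) (1:ℂ))‖₊ : ℝ≥0∞) ^ 2 ≤ 1 := by
  have hfin : ∀ w : V, T.zsq lam w ≠ ∞ := T.zsq_ne_top lam hdense
  have hzrw : ∀ u : V, (∑' v : T.chi u, (‖lam (v:V)‖₊ : ℝ≥0∞) ^ 2 /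
      (‖T.shift lam (lp.single 2 (v:V) (1:ℂ))‖₊ : ℝ≥0∞) ^ 2)
      = ∑' v : T.chi u, (‖lam (v:V)‖₊ : ℝ≥0∞) ^ 2 / T.zsq lam v :=
    fun u => tsum_congr fun v => by rw [T.shift_single_ennnorm lam hfin]
  constructor
  · intro hhyp u
    rw [hzrw u]
    exact T.forward lam hleafless hnz hdense hhyp.2.2 u
  · intro hcond
    have hcond' : ∀ u : V, ∑' v : T.chi u,
        (‖lam (v:V)‖₊ : ℝ≥0∞) ^ 2 / T.zsq lam v ≤ 1 := fun u => by
      rw [← hzrw u]; exact hcond u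
    refine ⟨hdense, ?_, ?_⟩
    · intro f hf
      obtain ⟨h, hprop, _⟩ := T.backward lam hleafless hnz hdense hcond' hf
      exact ⟨h, hprop⟩
    · intro f hf h' hprop'
      obtain ⟨h, hprop, hnorm⟩ := T.backward lam hleafless hnz hdense hcond' hf
      have heq : h = h' := T.dense_unique lam hdense
        (fun g hg => by rw [← hprop g hg, hprop' g hg])
      rwa [← heq]
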